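/- Let G be a group generated by a finite symmetric set S, with word length |·|_G. For every ε > 0 there exists a finite constant C_ε such that the following holds: if (p_g)_{g ∈ G, g ≠ e} is any family of values in [0,1], then Σ_{g ≠ e} [ -p_g log p_g - (1-p_g) log(1-p_g) ] ≤ C_ε · Σ_{g ≠ e} |g|_G · p_g + ε, where 0 log 0 := 0 and both sums are allowed to take the value +∞. -/

import Mathlib

open scoped ENNReal

/-- The word length of `g` with respect to the generating set `S`:
the least `n` such that `g` is a product of `n` elements of `S` (with `|e| = 0`). -/
noncomputable def wordLength {G : Type*} [Group G] (S : Set G) (g : G) : ℕ :=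
  sInf {n | ∃ l : List G, l.length = n ∧ (∀ s ∈ l, s ∈ S) ∧ l.prod = g}

section lemmas
variable {G : Type*} [Group G]

lemma wl_set_nonempty (S : Set G) (hSsym : ∀ s ∈ S, s⁻¹ ∈ S)
    (hSgen : Subgroup.closure S = ⊤) (g : G) :
    ∃ l : List G, (∀ s ∈ l, s ∈ S) ∧ l.prod = g := by
  have hg : g ∈ (Subgroup.closure S).toSubmonoid := by rw [hSgen]; trivial
  rw [Subgroup.closure_toSubmonoid] at hg
  obtain ⟨l, hl, hp⟩ := Submonoid.exists_list_of_mem_closure hg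
  refine ⟨l, fun s hs => ?_, hp⟩
  rcases hl s hs with h | h
  · exact h
  · simpa using hSsym _ h
end lemmas

section lemmas2
variable {G : Type*} [Group G]

lemma wl_spec (S : Set G) (hSsym : ∀ s ∈ S, s⁻¹ ∈ S)
    (hSgen : Subgroup.closure S = ⊤) (g : G) :
    ∃ l : List G, l.length = wordLength S g ∧ (∀ s ∈ l, s ∈ S) ∧ l.prod = g := by
  have hne : {n | ∃ l : List G, l.length = n ∧ (∀ s ∈ l, s ∈ S) ∧ l.prod = g}.Nonempty := by
    obtain ⟨l, h1, h2⟩ := wl_set_nonempty S hSsym hSgen g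
    exact ⟨l.length, l, rfl, h1, h2⟩
  exact Nat.sInf_mem hne

lemma wl_pos (S : Set G) (hSsym : ∀ s ∈ S, s⁻¹ ∈ S)
    (hSgen : Subgroup.closure S = ⊤) {g : G} (hg : g ≠ 1) :
    1 ≤ wordLength S g := by
  obtain ⟨l, hlen, _, hprod⟩ := wl_spec S hSsym hSgen g
  rcases Nat.eq_zero_or_pos (wordLength S g) with h | h
  · exfalso
    rw [h, List.length_eq_zero_iff] at hlen
    subst hlen
    simp at hprod
    exact hg hprod.symm
  · exact h
end lemmas2

lemma negMulLog_one_sub_le {p : ℝ} (h0 : 0 ≤ p) (h1 : p ≤ 1) :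
    Real.negMulLog (1 - p) ≤ p := by
  rcases eq_or_lt_of_le h1 with h | h
  · simp only [← h, sub_self, Real.negMulLog_zero]; exact h0
  · have hq : 0 < 1 - p := by linarith
    have h3 := Real.log_le_sub_one_of_pos (show (0:ℝ) < (1-p)⁻¹ from by positivity)
    rw [Real.log_inv] at h3
    have h4 : (1-p) * (1-p)⁻¹ = 1 := mul_inv_cancel₀ (ne_of_gt hq)
    rw [Real.negMulLog]
    nlinarith [mul_le_mul_of_nonneg_left h3 (le_of_lt hq)]

lemma negMulLog_le_lin {p a : ℝ} (h0 : 0 ≤ p) (ha : 0 ≤ a) :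
    Real.negMulLog p ≤ a * p + Real.exp (-1 - a) := by
  rcases eq_or_lt_of_le h0 with h | h
  · simp [← h, Real.negMulLog]; positivity
  · have hE : 0 < Real.exp (-1 - a) / p := by positivity
    have := Real.log_le_sub_one_of_pos hE
    rw [Real.log_div (by positivity) (ne_of_gt h), Real.log_exp] at this
    rw [Real.negMulLog]
    have h2 : (-1 - a - Real.log p) * p ≤ (Real.exp (-1 - a) / p - 1) * p :=
      mul_le_mul_of_nonneg_right this h0
    rw [div_sub' (ne_of_gt h), div_mul_eq_mul_div, mul_div_assoc,
      div_self (ne_of_gt h)] at h2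
    nlinarith [h2]

lemma pointwise_bound {p a : ℝ} (h0 : 0 ≤ p) (h1 : p ≤ 1) (ha : 0 ≤ a) :
    Real.negMulLog p + Real.negMulLog (1 - p) ≤ (a + 1) * p + Real.exp (-1 - a) := by
  have := negMulLog_le_lin h0 ha
  have := negMulLog_one_sub_le h0 h1
  linarith

lemma tsum_list_pow {α : Type*} [Fintype α] (r : ℝ≥0∞) :
    ∑' l : List α, r ^ l.length = ∑' n : ℕ, (Fintype.card α : ℝ≥0∞) ^ n * r ^ n := by
  rw [← (Equiv.sigmaFiberEquiv (List.length : List α → ℕ)).tsum_eq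
    (fun l => r ^ l.length)]
  rw [ENNReal.tsum_sigma (f := fun n (x : {l : List α // l.length = n}) =>
    r ^ ((Equiv.sigmaFiberEquiv (List.length : List α → ℕ)) ⟨n, x⟩).length)]
  apply tsum_congr
  intro n
  have : ∀ x : {l : List α // l.length = n},
      r ^ ((Equiv.sigmaFiberEquiv (List.length : List α → ℕ)) ⟨n, x⟩).length = r ^ n := by
    rintro ⟨l, hl⟩; simp [hl]
  rw [tsum_congr this]
  have e : {l : List α // l.length = n} ≃ List.Vector α n := Equiv.cast rfl
  rw [show (∑' _ : {l : List α // l.length = n}, r ^ n)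
      = ∑' _ : List.Vector α n, r ^ n from e.tsum_eq (fun _ => r ^ n)]
  rw [tsum_fintype, Finset.sum_const, Finset.card_univ, card_vector, nsmul_eq_mul]
  simp

lemma tsum_geom_half : (∑' n : ℕ, ((1:ℝ≥0∞)/2) ^ n) = 2 := by
  rw [ENNReal.tsum_geometric, one_div, ENNReal.one_sub_inv_two, inv_inv]

lemma tsum_pow_wl_le {G : Type*} [Group G] (S : Set G) (hSfin : S.Finite)
    (hSsym : ∀ s ∈ S, s⁻¹ ∈ S) (hSgen : Subgroup.closure S = ⊤) (r : ℝ≥0∞)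
    (hr : (hSfin.toFinset.card : ℝ≥0∞) * r ≤ 1/2) :
    ∑' g : {g : G // g ≠ 1}, r ^ wordLength S (g : G) ≤ 2 := by
  set α := {x : G // x ∈ hSfin.toFinset} with hα
  have hW : ∀ g : {g : G // g ≠ 1}, ∃ l : List α,
      l.length = wordLength S g.1 ∧ (l.map Subtype.val).prod = g.1 := by
    intro g
    obtain ⟨l, hlen, hmem, hprod⟩ := wl_spec S hSsym hSgen g.1
    have hmem' : ∀ s ∈ l, s ∈ hSfin.toFinset := fun s hs =>
      hSfin.mem_toFinset.2 (hmem s hs)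
    refine ⟨l.pmap (fun a h => (⟨a, h⟩ : α)) hmem', ?_, ?_⟩
    · simp [hlen]
    · simp [List.map_pmap, hprod]
  set F : {g : G // g ≠ 1} → List α := fun g => (hW g).choose with hF
  have hFinj : Function.Injective F := by
    intro g1 g2 h
    apply Subtype.ext
    rw [← (hW g1).choose_spec.2, ← (hW g2).choose_spec.2]
    exact congrArg (fun l => (l.map Subtype.val).prod) h
  calc ∑' g : {g : G // g ≠ 1}, r ^ wordLength S (g : G)
      = ∑' g : {g : G // g ≠ 1}, (fun l : List α => r ^ l.length) (F g) := by
        apply tsum_congr; intro g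
        simp only [hF, (hW g).choose_spec.1]
    _ ≤ ∑' l : List α, r ^ l.length :=
        ENNReal.tsum_comp_le_tsum_of_injective hFinj _
    _ = ∑' n : ℕ, (Fintype.card α : ℝ≥0∞) ^ n * r ^ n := tsum_list_pow r
    _ ≤ ∑' n : ℕ, ((1:ℝ≥0∞)/2) ^ n := by
        apply ENNReal.tsum_le_tsum
        intro n
        rw [← mul_pow]
        apply pow_le_pow_left' _ n
        show (Fintype.card {x : G // x ∈ hSfin.toFinset} : ℝ≥0∞) * r ≤ 1/2
        rwa [Fintype.card_coe]
    _ = 2 := tsum_geom_half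

theorem stmt0 {G : Type*} [Group G] (S : Set G) (hSfin : S.Finite)
    (hSsym : ∀ s ∈ S, s⁻¹ ∈ S) (hSgen : Subgroup.closure S = ⊤)
    {ε : ℝ} (hε : 0 < ε) :
    ∃ C : ℝ, 0 ≤ C ∧ ∀ p : G → ℝ, (∀ g : G, 0 ≤ p g ∧ p g ≤ 1) →
      (∑' g : {g : G // g ≠ 1},
          ENNReal.ofReal (Real.negMulLog (p (g : G)) + Real.negMulLog (1 - p (g : G))))
        ≤ ENNReal.ofReal C *
            (∑' g : {g : G // g ≠ 1},
              (wordLength S (g : G) : ℝ≥0∞) * ENNReal.ofReal (p (g : G)))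
          + ENNReal.ofReal ε := by
  classical
  set k : ℝ := (hSfin.toFinset.card : ℝ) with hk
  have hk0 : 0 ≤ k := Nat.cast_nonneg _
  set m : ℝ := min ε 1 with hm
  have hm0 : 0 < m := lt_min hε one_pos
  have hm1 : m ≤ 1 := min_le_right _ _
  have hmε : m ≤ ε := min_le_left _ _
  set D : ℝ := Real.log ((2*k+2)/m) with hD
  have hpos : 0 < (2*k+2)/m := by positivity
  have heD : Real.exp (-D) = m/(2*k+2) := by
    rw [hD, Real.exp_neg, Real.exp_log hpos, inv_div]
  have hD0 : 0 ≤ D := Real.log_nonneg (by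
    rw [le_div_iff₀ hm0]; nlinarith)
  have hk_half : k * Real.exp (-D) ≤ 1/2 := by
    rw [heD, mul_div_assoc', div_le_div_iff₀ (by positivity) (by norm_num)]
    nlinarith
  have hεD : Real.exp (-D) ≤ ε := by
    rw [heD]
    calc m/(2*k+2) ≤ m/1 :=
          div_le_div_of_nonneg_left (le_of_lt hm0) one_pos (by nlinarith)
      _ = m := div_one m
      _ ≤ ε := hmε
  refine ⟨2*D+1, by linarith, ?_⟩
  intro p hp
  set r : ℝ≥0∞ := ENNReal.ofReal (Real.exp (-D)) with hr
  have hr_half : ((hSfin.toFinset.card : ℕ) : ℝ≥0∞) * r ≤ 1/2 := by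
    rw [hr, ← ENNReal.ofReal_natCast, ← ENNReal.ofReal_mul (Nat.cast_nonneg _)]
    calc ENNReal.ofReal (k * Real.exp (-D)) ≤ ENNReal.ofReal (1/2) :=
          ENNReal.ofReal_le_ofReal hk_half
      _ = 1/2 := by
          rw [ENNReal.ofReal_div_of_pos (by norm_num)]
          norm_num
  have he1 : Real.exp (-1 : ℝ) ≤ 1/2 := by
    rw [Real.exp_neg]
    have h2 : (2:ℝ) ≤ Real.exp 1 := by nlinarith [Real.add_one_le_exp (1:ℝ)]
    calc (Real.exp 1)⁻¹ ≤ (2:ℝ)⁻¹ := inv_anti₀ (by norm_num) h2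
      _ = 1/2 := by norm_num
  have hE : (∑' g : {g : G // g ≠ 1},
      ENNReal.ofReal (Real.exp (-1 - 2*D*(wordLength S (g:G) : ℝ))))
      ≤ ENNReal.ofReal ε := by
    calc ∑' g : {g : G // g ≠ 1},
        ENNReal.ofReal (Real.exp (-1 - 2*D*(wordLength S (g:G) : ℝ)))
        ≤ ∑' g : {g : G // g ≠ 1},
            ENNReal.ofReal (Real.exp (-1 - D)) * r ^ (wordLength S (g:G)) := by
          apply ENNReal.tsum_le_tsum
          intro g
          have hn : (1:ℝ) ≤ (wordLength S (g:G) : ℝ) :=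
            Nat.one_le_cast.2 (wl_pos S hSsym hSgen g.2)
          have h1 : Real.exp (-1 - 2*D*(wordLength S (g:G) : ℝ))
              ≤ Real.exp (-1 - D) * Real.exp (-D) ^ (wordLength S (g:G)) := by
            rw [← Real.exp_nat_mul, ← Real.exp_add]
            apply Real.exp_le_exp.2
            nlinarith [mul_nonneg hD0 (by linarith : (0:ℝ) ≤ (wordLength S (g:G) : ℝ) - 1)]
          calc ENNReal.ofReal (Real.exp (-1 - 2*D*(wordLength S (g:G) : ℝ)))
              ≤ ENNReal.ofReal (Real.exp (-1 - D) * Real.exp (-D) ^ (wordLength S (g:G))) :=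
                ENNReal.ofReal_le_ofReal h1
            _ = ENNReal.ofReal (Real.exp (-1 - D)) * r ^ (wordLength S (g:G)) := by
                rw [ENNReal.ofReal_mul (Real.exp_nonneg _), hr,
                  ENNReal.ofReal_pow (Real.exp_nonneg _)]
      _ = ENNReal.ofReal (Real.exp (-1 - D)) *
            ∑' g : {g : G // g ≠ 1}, r ^ (wordLength S (g:G)) := ENNReal.tsum_mul_left
      _ ≤ ENNReal.ofReal (Real.exp (-1 - D)) * 2 :=
          mul_le_mul_right (tsum_pow_wl_le S hSfin hSsym hSgen r hr_half) _
      _ ≤ ENNReal.ofReal ε := by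
          rw [show (2:ℝ≥0∞) = ENNReal.ofReal 2 by norm_num,
            ← ENNReal.ofReal_mul (Real.exp_nonneg _)]
          apply ENNReal.ofReal_le_ofReal
          have h3 : Real.exp (-1 - D) = Real.exp (-1) * Real.exp (-D) := by
            rw [← Real.exp_add]; ring_nf
          nlinarith [Real.exp_nonneg (-D), Real.exp_nonneg (-1-D)]
  have hpt : ∀ g : {g : G // g ≠ 1},
      ENNReal.ofReal (Real.negMulLog (p (g:G)) + Real.negMulLog (1 - p (g:G)))
        ≤ ENNReal.ofReal (2*D+1) *
            ((wordLength S (g:G) : ℝ≥0∞) * ENNReal.ofReal (p (g:G)))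
          + ENNReal.ofReal (Real.exp (-1 - 2*D*(wordLength S (g:G) : ℝ))) := by
    intro g
    have hn : (1:ℝ) ≤ (wordLength S (g:G) : ℝ) :=
      Nat.one_le_cast.2 (wl_pos S hSsym hSgen g.2)
    have h0 := (hp (g:G)).1
    have h1 := (hp (g:G)).2
    have key : Real.negMulLog (p (g:G)) + Real.negMulLog (1 - p (g:G))
        ≤ (2*D+1) * ((wordLength S (g:G) : ℝ) * p (g:G))
          + Real.exp (-1 - 2*D*(wordLength S (g:G) : ℝ)) := by
      have hb := pointwise_bound h0 h1
        (a := 2*D*(wordLength S (g:G) : ℝ))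
        (mul_nonneg (by linarith) (by linarith))
      nlinarith [mul_nonneg h0 (by linarith : (0:ℝ) ≤ (wordLength S (g:G) : ℝ) - 1)]
    calc ENNReal.ofReal (Real.negMulLog (p (g:G)) + Real.negMulLog (1 - p (g:G)))
        ≤ ENNReal.ofReal ((2*D+1) * ((wordLength S (g:G) : ℝ) * p (g:G))
            + Real.exp (-1 - 2*D*(wordLength S (g:G) : ℝ))) :=
          ENNReal.ofReal_le_ofReal key
      _ ≤ ENNReal.ofReal ((2*D+1) * ((wordLength S (g:G) : ℝ) * p (g:G)))
            + ENNReal.ofReal (Real.exp (-1 - 2*D*(wordLength S (g:G) : ℝ))) :=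
          ENNReal.ofReal_add_le
      _ = ENNReal.ofReal (2*D+1) *
            ((wordLength S (g:G) : ℝ≥0∞) * ENNReal.ofReal (p (g:G)))
          + ENNReal.ofReal (Real.exp (-1 - 2*D*(wordLength S (g:G) : ℝ))) := by
          rw [ENNReal.ofReal_mul (by linarith), ENNReal.ofReal_mul (by linarith),
            ENNReal.ofReal_natCast]
  calc (∑' g : {g : G // g ≠ 1},
      ENNReal.ofReal (Real.negMulLog (p (g:G)) + Real.negMulLog (1 - p (g:G))))
      ≤ ∑' g : {g : G // g ≠ 1},
          (ENNReal.ofReal (2*D+1) *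
            ((wordLength S (g:G) : ℝ≥0∞) * ENNReal.ofReal (p (g:G)))
          + ENNReal.ofReal (Real.exp (-1 - 2*D*(wordLength S (g:G) : ℝ)))) :=
        ENNReal.tsum_le_tsum hpt
    _ = (∑' g : {g : G // g ≠ 1}, ENNReal.ofReal (2*D+1) *
            ((wordLength S (g:G) : ℝ≥0∞) * ENNReal.ofReal (p (g:G))))
        + ∑' g : {g : G // g ≠ 1},
            ENNReal.ofReal (Real.exp (-1 - 2*D*(wordLength S (g:G) : ℝ))) :=
        ENNReal.tsum_add
    _ = ENNReal.ofReal (2*D+1) *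
          (∑' g : {g : G // g ≠ 1},
            (wordLength S (g:G) : ℝ≥0∞) * ENNReal.ofReal (p (g:G)))
        + ∑' g : {g : G // g ≠ 1},
            ENNReal.ofReal (Real.exp (-1 - 2*D*(wordLength S (g:G) : ℝ))) := by
        rw [ENNReal.tsum_mul_left]
    _ ≤ ENNReal.ofReal (2*D+1) *
          (∑' g : {g : G // g ≠ 1},
            (wordLength S (g:G) : ℝ≥0∞) * ENNReal.ofReal (p (g:G)))
        + ENNReal.ofReal ε := add_le_add_right hE _
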